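/- arXiv:1304.2699 — 3 statements merged into one kernel-verified Lean document; each statement's English description precedes it below -/
import Mathlib

section
/- For every odd n ∈ ℕ, Σ_{k ∈ Reg_n} tan⁴(kπ/n) = (1/3)(ρ_4(n) − 4ρ_2(n) + 3ρ(n)), where ρ_s(n) = Σ_{d || n} φ_s(d) with φ_s(n) = Σ_{d|n} d^s μ(n/d), and ρ(n) = ρ_1(n) = #Reg_n. -/
open Finset Real
open scoped Classical

/-- `k` is regular (mod `n`): there is an integer `x` with `k² x ≡ k (mod n)`. -/
def IsRegularMod (k n : ℕ) : Prop := ∃ x : ℤ, (n : ℤ) ∣ (k : ℤ) ^ 2 * x - (k : ℤ)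

/-- `Reg_n`, the set of `k ∈ {1,…,n}` that are regular (mod `n`). -/
noncomputable def Reg (n : ℕ) : Finset ℕ :=
  (Finset.Icc 1 n).filter fun k => IsRegularMod k n

/-- The unitary divisors of `n`: divisors `d` of `n` with `gcd(d, n/d) = 1`. -/
def unitaryDivisors (n : ℕ) : Finset ℕ := n.divisors.filter fun d => Nat.Coprime d (n / d)

/-- The Jordan function `φ_s(n) = Σ_{d ∣ n} d^s μ(n/d)` for `s ∈ ℕ`. -/
def phiInt (s n : ℕ) : ℤ :=
  ∑ d ∈ n.divisors, ArithmeticFunction.moebius (n / d) * (d : ℤ) ^ s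

/-- `ρ_s(n) = Σ_{d ∥ n} φ_s(d)`, the sum over the unitary divisors of `n`. -/
def rhoInt (s n : ℕ) : ℤ := ∑ d ∈ unitaryDivisors n, phiInt s d

lemma moeb_sum (N : ℕ) :
    ∑ f ∈ N.divisors, (ArithmeticFunction.moebius f : ℤ) = if N = 1 then 1 else 0 := by
  have h : ((ArithmeticFunction.moebius * ArithmeticFunction.zeta : ArithmeticFunction ℤ)) N
      = (1 : ArithmeticFunction ℤ) N := by
    rw [ArithmeticFunction.moebius_mul_coe_zeta]
  rwa [ArithmeticFunction.coe_mul_zeta_apply, ArithmeticFunction.one_apply] at h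

lemma isRegularMod_iff (n k : ℕ) (hn : 1 ≤ n) :
    IsRegularMod k n ↔ Nat.Coprime (Nat.gcd k n) (n / Nat.gcd k n) := by
  have hn0 : n ≠ 0 := by omega
  set d := Nat.gcd k n with hd
  have hdn : d ∣ n := Nat.gcd_dvd_right k n
  have hdk : d ∣ k := Nat.gcd_dvd_left k n
  have hd0 : 0 < d := Nat.gcd_pos_of_pos_right k (by omega)
  have hde : d * (n / d) = n := Nat.mul_div_cancel' hdn
  constructor
  · rintro ⟨x, hx⟩
    by_contra hco
    set e := n / d with he
    set p := (Nat.gcd d e).minFac with hp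
    have hg1 : Nat.gcd d e ≠ 1 := hco
    have hpp : p.Prime := Nat.minFac_prime hg1
    have hpd : p ∣ d := (Nat.minFac_dvd _).trans (Nat.gcd_dvd_left d e)
    have hpe : p ∣ e := (Nat.minFac_dvd _).trans (Nat.gcd_dvd_right d e)
    have hpk : p ∣ k := hpd.trans hdk
    set a := n.factorization p with ha
    have hpa : p ^ a ∣ n := Nat.ordProj_dvd n p
    have hx' : (n:ℤ) ∣ (k:ℤ) * ((k:ℤ) * x - 1) := by
      have : (k:ℤ) * ((k:ℤ) * x - 1) = (k:ℤ)^2 * x - k := by ring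
      rw [this]; exact hx
    have hnd : ((p:ℤ))^a ∣ (k:ℤ) * ((k:ℤ) * x - 1) := by
      refine dvd_trans ?_ hx'
      exact_mod_cast hpa
    have hpint : Prime (p:ℤ) := Nat.prime_iff_prime_int.mp hpp
    have hnotdvd : ¬ (p:ℤ) ∣ ((k:ℤ) * x - 1) := by
      intro h
      have h1 : (p:ℤ) ∣ (k:ℤ) * x := Dvd.dvd.mul_right (by exact_mod_cast hpk) x
      have : (p:ℤ) ∣ 1 := by
        have := dvd_sub h1 h
        simpa using this
      have := Int.le_of_dvd one_pos this
      have := hpp.two_le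
      omega
    have hcop : IsCoprime ((p:ℤ)^a) ((k:ℤ) * x - 1) :=
      (hpint.coprime_iff_not_dvd.mpr hnotdvd).pow_left
    have hpak : ((p:ℤ))^a ∣ (k:ℤ) := hcop.dvd_of_dvd_mul_right hnd
    have hpakn : p ^ a ∣ k := by exact_mod_cast hpak
    have hpad : p ^ a ∣ d := Nat.dvd_gcd hpakn hpa
    have hfin : p ^ (a+1) ∣ n := by
      have : p ^ a * p ∣ d * e := mul_dvd_mul hpad hpe
      rw [hde] at this
      rwa [pow_succ]
    rw [Nat.Prime.pow_dvd_iff_le_factorization hpp hn0] at hfin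
    omega
  · intro hco
    have hcop' : Nat.Coprime (k / d) (n / d) := Nat.coprime_div_gcd_div_gcd hd0
    have hk : d * (k / d) = k := Nat.mul_div_cancel' hdk
    have hke : Nat.Coprime k (n / d) := by
      rw [← hk]; exact Nat.Coprime.mul hco hcop'
    have : IsCoprime (k:ℤ) ((n/d : ℕ):ℤ) := Nat.isCoprime_iff_coprime.mpr hke
    obtain ⟨u, v, huv⟩ := this
    refine ⟨u, -(((k/d : ℕ)) * v), ?_⟩
    have hkc : (k:ℤ) = (d:ℤ) * ((k/d : ℕ):ℤ) := by exact_mod_cast hk.symm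
    have hnc : (n:ℤ) = (d:ℤ) * ((n/d : ℕ):ℤ) := by exact_mod_cast hde.symm
    rw [hkc] at huv
    rw [hnc, hkc]
    linear_combination ((d:ℤ) * ((k/d : ℕ):ℤ)) * huv

lemma reg_eq_filter (n : ℕ) (hn : 1 ≤ n) :
    Reg n = (Finset.Icc 1 n).filter (fun k => Nat.gcd k n ∈ unitaryDivisors n) := by
  unfold Reg
  apply Finset.filter_congr
  intro k _
  rw [isRegularMod_iff n k hn, unitaryDivisors, Finset.mem_filter, Nat.mem_divisors]
  have h : Nat.gcd k n ∣ n := Nat.gcd_dvd_right k n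
  constructor
  · intro hc; exact ⟨⟨h, by omega⟩, hc⟩
  · rintro ⟨-, hc⟩; exact hc

lemma reg_sum_fiber (n : ℕ) (hn : 1 ≤ n) (g : ℕ → ℝ) :
    ∑ k ∈ Reg n, g k =
      ∑ d ∈ unitaryDivisors n,
        ∑ k ∈ (Finset.Icc 1 n).filter (fun k => Nat.gcd k n = d), g k := by
  rw [reg_eq_filter n hn]
  rw [← Finset.sum_fiberwise_of_maps_to (g := fun k => Nat.gcd k n) (t := unitaryDivisors n)
      (fun k hk => (Finset.mem_filter.mp hk).2)]
  apply Finset.sum_congr rfl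
  intro d hd
  apply Finset.sum_congr _ (fun _ _ => rfl)
  rw [Finset.filter_filter]
  apply Finset.filter_congr
  intro k _
  constructor
  · rintro ⟨-, hc⟩; exact hc
  · intro hc
    refine ⟨?_, hc⟩
    show Nat.gcd k n ∈ unitaryDivisors n
    rw [hc]; exact hd

lemma fiber_sum (n d : ℕ) (hn : 1 ≤ n) (hd : d ∣ n) (hd0 : 0 < d) (g : ℕ → ℕ → ℝ)
    (hg : ∀ d m e : ℕ, 0 < d → g (d * m) (d * e) = g m e) :
    ∑ k ∈ (Finset.Icc 1 n).filter (fun k => Nat.gcd k n = d), g k n =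
      ∑ m ∈ (Finset.Icc 1 (n/d)).filter (fun m => Nat.Coprime m (n/d)), g m (n/d) := by
  have hn0 : n ≠ 0 := by omega
  have hde : d * (n / d) = n := Nat.mul_div_cancel' hd
  refine (Finset.sum_nbij' (fun m => d * m) (fun k => k / d) ?_ ?_ ?_ ?_ ?_).symm
  · intro m hm
    simp only [Finset.mem_filter, Finset.mem_Icc] at hm ⊢
    obtain ⟨⟨h1, h2⟩, hcop⟩ := hm
    refine ⟨⟨Nat.one_le_iff_ne_zero.mpr (by positivity), ?_⟩, ?_⟩
    · calc d * m ≤ d * (n / d) := Nat.mul_le_mul_left d h2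
        _ = n := hde
    · conv_lhs => rw [← hde]
      rw [Nat.gcd_mul_left, hcop, mul_one]
  · intro k hk
    simp only [Finset.mem_filter, Finset.mem_Icc] at hk ⊢
    obtain ⟨⟨h1, h2⟩, hgcd⟩ := hk
    have hdk : d ∣ k := hgcd ▸ Nat.gcd_dvd_left k n
    refine ⟨⟨?_, Nat.div_le_div_right h2⟩, ?_⟩
    · rw [Nat.one_le_div_iff hd0]; exact Nat.le_of_dvd (by omega) hdk
    · have := Nat.coprime_div_gcd_div_gcd (m := k) (n := n) (hgcd ▸ hd0)
      rwa [hgcd] at this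
  · intro m hm
    exact Nat.mul_div_cancel_left m hd0
  · intro k hk
    simp only [Finset.mem_filter, Finset.mem_Icc] at hk
    have hdk : d ∣ k := hk.2 ▸ Nat.gcd_dvd_left k n
    exact Nat.mul_div_cancel' hdk
  · intro m _
    conv_lhs => rw [← hg d m (n/d) hd0, hde]

lemma unitary_sum_div (n : ℕ) (hn : 1 ≤ n) (F : ℕ → ℝ) :
    ∑ d ∈ unitaryDivisors n, F (n / d) = ∑ d ∈ unitaryDivisors n, F d := by
  have hn0 : n ≠ 0 := by omega
  refine Finset.sum_nbij' (fun d => n / d) (fun d => n / d) ?_ ?_ ?_ ?_ ?_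
  · intro d hd
    simp only [unitaryDivisors, Finset.mem_filter, Nat.mem_divisors] at hd ⊢
    obtain ⟨⟨hdvd, -⟩, hcop⟩ := hd
    rw [Nat.div_div_self hdvd hn0]
    exact ⟨⟨Nat.div_dvd_of_dvd hdvd, hn0⟩, hcop.symm⟩
  · intro d hd
    simp only [unitaryDivisors, Finset.mem_filter, Nat.mem_divisors] at hd ⊢
    obtain ⟨⟨hdvd, -⟩, hcop⟩ := hd
    rw [Nat.div_div_self hdvd hn0]
    exact ⟨⟨Nat.div_dvd_of_dvd hdvd, hn0⟩, hcop.symm⟩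
  · intro d hd
    simp only [unitaryDivisors, Finset.mem_filter, Nat.mem_divisors] at hd
    exact Nat.div_div_self hd.1.1 hn0
  · intro d hd
    simp only [unitaryDivisors, Finset.mem_filter, Nat.mem_divisors] at hd
    exact Nat.div_div_self hd.1.1 hn0
  · intro d _
    rfl

lemma dvd_filter_sum (e f : ℕ) (hf : f ∣ e) (hf0 : 0 < f) (G : ℕ → ℝ) :
    ∑ m ∈ (Finset.Icc 1 e).filter (fun m => f ∣ m), G m
      = ∑ m ∈ Finset.Icc 1 (e/f), G (f * m) := by
  have hfe : f * (e / f) = e := Nat.mul_div_cancel' hf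
  refine (Finset.sum_nbij' (fun m => f * m) (fun m => m / f) ?_ ?_ ?_ ?_ ?_).symm
  · intro m hm
    simp only [Finset.mem_filter, Finset.mem_Icc] at hm ⊢
    obtain ⟨h1, h2⟩ := hm
    refine ⟨⟨Nat.one_le_iff_ne_zero.mpr (by positivity), ?_⟩, Dvd.intro m rfl⟩
    calc f * m ≤ f * (e / f) := Nat.mul_le_mul_left f h2
      _ = e := hfe
  · intro k hk
    simp only [Finset.mem_filter, Finset.mem_Icc] at hk ⊢
    obtain ⟨⟨h1, h2⟩, hdvd⟩ := hk
    exact ⟨by rw [Nat.one_le_div_iff hf0]; exact Nat.le_of_dvd (by omega) hdvd,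
      Nat.div_le_div_right h2⟩
  · intro m _; exact Nat.mul_div_cancel_left m hf0
  · intro k hk
    simp only [Finset.mem_filter, Finset.mem_Icc] at hk
    exact Nat.mul_div_cancel' hk.2
  · intro m _; rfl

lemma coprime_sum_moebius (e : ℕ) (he : 1 ≤ e) (g : ℕ → ℕ → ℝ)
    (hg : ∀ d m e : ℕ, 0 < d → g (d * m) (d * e) = g m e) :
    ∑ m ∈ (Finset.Icc 1 e).filter (fun m => Nat.Coprime m e), g m e =
      ∑ f ∈ e.divisors,
        (ArithmeticFunction.moebius f : ℝ) * ∑ m ∈ Finset.Icc 1 (e/f), g m (e/f) := by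
  have he0 : e ≠ 0 := by omega
  rw [Finset.sum_filter]
  have step1 : ∀ m ∈ Finset.Icc 1 e,
      (if Nat.Coprime m e then g m e else 0)
        = ∑ f ∈ e.divisors, (if f ∣ m then (ArithmeticFunction.moebius f : ℝ) * g m e else 0) := by
    intro m hm
    simp only [Finset.mem_Icc] at hm
    have hgcd0 : Nat.gcd m e ≠ 0 := Nat.gcd_ne_zero_right he0
    have hdiveq : e.divisors.filter (fun f => f ∣ m) = (Nat.gcd m e).divisors := by
      ext f
      simp only [Finset.mem_filter, Nat.mem_divisors]
      constructor
      · rintro ⟨⟨hfe, -⟩, hfm⟩; exact ⟨Nat.dvd_gcd hfm hfe, hgcd0⟩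
      · rintro ⟨hfg, -⟩
        exact ⟨⟨hfg.trans (Nat.gcd_dvd_right m e), he0⟩, hfg.trans (Nat.gcd_dvd_left m e)⟩
    rw [← Finset.sum_filter, hdiveq, ← Finset.sum_mul]
    have hmo : (∑ f ∈ (Nat.gcd m e).divisors, (ArithmeticFunction.moebius f : ℝ))
        = if Nat.gcd m e = 1 then (1:ℝ) else 0 := by
      have h1 := moeb_sum (Nat.gcd m e)
      have h2 : ((∑ f ∈ (Nat.gcd m e).divisors, (ArithmeticFunction.moebius f : ℤ) : ℤ) : ℝ)
          = ((if Nat.gcd m e = 1 then (1:ℤ) else 0 : ℤ) : ℝ) := by rw [h1]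
      push_cast at h2
      rw [h2]
    rw [hmo]
    unfold Nat.Coprime
    split <;> simp
  rw [Finset.sum_congr rfl step1, Finset.sum_comm]
  apply Finset.sum_congr rfl
  intro f hf
  simp only [Nat.mem_divisors] at hf
  obtain ⟨hfe, -⟩ := hf
  have hf0 : 0 < f := Nat.pos_of_dvd_of_pos hfe (by omega)
  rw [← Finset.sum_filter, dvd_filter_sum e f hfe hf0, Finset.mul_sum]
  apply Finset.sum_congr rfl
  intro m _
  congr 1
  conv_lhs => rw [show e = f * (e / f) from (Nat.mul_div_cancel' hfe).symm]
  rw [hg f m (e/f) hf0]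

lemma reg_sum_eq (n : ℕ) (hn : 1 ≤ n) (g : ℕ → ℕ → ℝ)
    (hg : ∀ d m e : ℕ, 0 < d → g (d * m) (d * e) = g m e) :
    ∑ k ∈ Reg n, g k n =
      ∑ e ∈ unitaryDivisors n, ∑ f ∈ e.divisors,
        (ArithmeticFunction.moebius f : ℝ) * ∑ m ∈ Finset.Icc 1 (e/f), g m (e/f) := by
  rw [reg_sum_fiber n hn (fun k => g k n)]
  rw [Finset.sum_congr rfl (fun d hd => by
    simp only [unitaryDivisors, Finset.mem_filter, Nat.mem_divisors] at hd
    exact fiber_sum n d hn hd.1.1 (Nat.pos_of_dvd_of_pos hd.1.1 (by omega)) g hg)]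
  rw [unitary_sum_div n hn
    (fun e => ∑ m ∈ (Finset.Icc 1 e).filter (fun m => Nat.Coprime m e), g m e)]
  apply Finset.sum_congr rfl
  intro e he
  have he1 : 1 ≤ e := by
    simp only [unitaryDivisors, Finset.mem_filter, Nat.mem_divisors] at he
    exact Nat.pos_of_dvd_of_pos he.1.1 (by omega)
  exact coprime_sum_moebius e he1 g hg

lemma divisor_reindex (e : ℕ) (he : 1 ≤ e) (G : ℕ → ℝ) :
    ∑ f ∈ e.divisors, (ArithmeticFunction.moebius f : ℝ) * G (e/f)
      = ∑ d ∈ e.divisors, (ArithmeticFunction.moebius (e/d) : ℝ) * G d := by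
  have h := Nat.sum_div_divisors e (fun d => (ArithmeticFunction.moebius (e/d) : ℝ) * G d)
  rw [← h]
  apply Finset.sum_congr rfl
  intro f hf
  simp only [Nat.mem_divisors] at hf
  rw [Nat.div_div_self hf.1 (by omega)]

lemma phiInt_cast (s e : ℕ) :
    ((phiInt s e : ℤ) : ℝ) = ∑ d ∈ e.divisors, (ArithmeticFunction.moebius (e/d) : ℝ) * (d:ℝ)^s := by
  rw [phiInt]
  push_cast
  rfl

lemma card_reg (n : ℕ) (hn : 1 ≤ n) : ((Reg n).card : ℝ) = (rhoInt 1 n : ℝ) := by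
  have h := reg_sum_eq n hn (fun _ _ => (1:ℝ)) (fun _ _ _ _ => rfl)
  have hL : ∑ k ∈ Reg n, (1:ℝ) = ((Reg n).card : ℝ) := by simp
  rw [hL] at h
  rw [h, rhoInt]
  push_cast [phiInt_cast]
  apply Finset.sum_congr rfl
  intro e he
  have he1 : 1 ≤ e := by
    simp only [unitaryDivisors, Finset.mem_filter, Nat.mem_divisors] at he
    exact Nat.pos_of_dvd_of_pos he.1.1 (by omega)
  have := divisor_reindex e he1 (fun x => (x:ℝ))
  simp only [Finset.sum_const, nsmul_eq_mul, mul_one, Nat.card_Icc] at *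
  simp only [Nat.add_sub_cancel] at *
  rw [this]
  apply Finset.sum_congr rfl
  intro d _
  rw [pow_one]

lemma sum_Icc_one {β : Type*} [AddCommMonoid β] (m : ℕ) (f : ℕ → β) :
    ∑ j ∈ Finset.Icc 1 m, f j = ∑ i ∈ Finset.range m, f (i+1) := by
  refine Finset.sum_nbij' (fun j => j - 1) (fun i => i + 1) ?_ ?_ ?_ ?_ ?_
  · intro a ha; simp only [Finset.mem_Icc] at ha; simp only [Finset.mem_range]; omega
  · intro a ha; simp only [Finset.mem_range] at ha; simp only [Finset.mem_Icc]; omega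
  · intro a ha; simp only [Finset.mem_Icc] at ha; omega
  · intro a _; omega
  · intro a ha; simp only [Finset.mem_Icc] at ha; congr 1; omega

lemma mod_two_cases (n m r : ℕ) (hn : 0 < n) (hr : r < n) (hm : m < 2*n) :
    m % n = r ↔ (m = r ∨ m = r + n) := by
  constructor
  · intro h
    rcases Nat.lt_or_ge m n with h1 | h1
    · rw [Nat.mod_eq_of_lt h1] at h; omega
    · rw [Nat.mod_eq_sub_mod h1, Nat.mod_eq_of_lt (by omega)] at h
      omega
  · rintro (rfl | rfl)
    · exact Nat.mod_eq_of_lt hr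
    · rw [Nat.add_mod_right]; exact Nat.mod_eq_of_lt hr

def Fint (n r : ℕ) : ℤ :=
  ∑ p ∈ (Finset.Icc 1 (n-1) ×ˢ Finset.Icc 1 (n-1)).filter (fun p => (p.1 + p.2) % n = r),
    (-1 : ℤ)^(p.1 + p.2)

lemma inner_eval (n : ℕ) (hodd : Odd n) (r j1 : ℕ) (hr : r ≤ n - 1)
    (hj1 : j1 ∈ Finset.Icc 1 (n-1)) :
    ∑ j2 ∈ Finset.Icc 1 (n-1), (if (j1 + j2) % n = r then (-1:ℤ)^(j1+j2) else 0)
      = if j1 < r then (-1:ℤ)^r else if j1 = r then 0 else (-1:ℤ)^(r+1) := by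
  simp only [Finset.mem_Icc] at hj1
  have hn2 : 2 ≤ n := by omega
  have hrn : r < n := by omega
  rcases lt_trichotomy j1 r with hlt | heq | hgt
  · rw [if_pos hlt]
    have hmem : r - j1 ∈ Finset.Icc 1 (n-1) := by simp only [Finset.mem_Icc]; omega
    rw [Finset.sum_eq_single_of_mem _ hmem ?_]
    · have h' : j1 + (r - j1) = r := by omega
      rw [h', Nat.mod_eq_of_lt hrn, if_pos rfl]
    · intro b hb hbne
      simp only [Finset.mem_Icc] at hb
      rw [if_neg]
      rw [mod_two_cases n _ r (by omega) hrn (by omega)]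
      omega
  · rw [if_neg (by omega), if_pos heq]
    apply Finset.sum_eq_zero
    intro b hb
    simp only [Finset.mem_Icc] at hb
    rw [if_neg]
    rw [mod_two_cases n _ r (by omega) hrn (by omega)]
    omega
  · rw [if_neg (by omega), if_neg (by omega)]
    have hmem : n + r - j1 ∈ Finset.Icc 1 (n-1) := by simp only [Finset.mem_Icc]; omega
    rw [Finset.sum_eq_single_of_mem _ hmem ?_]
    · have h' : j1 + (n + r - j1) = r + n := by omega
      rw [h', Nat.add_mod_right, Nat.mod_eq_of_lt hrn, if_pos rfl]
      rw [pow_add, pow_add, pow_one, hodd.neg_one_pow]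
    · intro b hb hbne
      simp only [Finset.mem_Icc] at hb
      rw [if_neg]
      rw [mod_two_cases n _ r (by omega) hrn (by omega)]
      omega

lemma Fint_eval (n : ℕ) (hn : 1 ≤ n) (hodd : Odd n) (r : ℕ) (hr : r ≤ n - 1) :
    Fint n r = if r = 0 then 1 - (n:ℤ) else (-1:ℤ)^r * (2*(r:ℤ) - n) := by
  rw [Fint, Finset.sum_filter, Finset.sum_product]
  rw [Finset.sum_congr rfl (fun j1 hj1 => inner_eval n hodd r j1 hr hj1)]
  rcases Nat.eq_zero_or_pos r with rfl | hr1
  · rw [if_pos rfl]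
    have hc : ∑ j1 ∈ Finset.Icc 1 (n-1),
        (if j1 < 0 then (-1:ℤ)^(0:ℕ) else if j1 = 0 then 0 else (-1:ℤ)^(0+1))
        = ∑ j1 ∈ Finset.Icc 1 (n-1), ((-1:ℤ)^(0+1)) := by
      apply Finset.sum_congr rfl
      intro j1 hj1
      simp only [Finset.mem_Icc] at hj1
      rw [if_neg (by omega), if_neg (by omega)]
    rw [hc]
    simp only [Finset.sum_const, Nat.card_Icc, nsmul_eq_mul]
    push_cast [Nat.cast_sub hn]
    ring
  · rw [if_neg (by omega)]
    have hdisj : Disjoint (Finset.Ico 1 r) (Finset.Icc r (n-1)) := by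
      rw [Finset.disjoint_left]
      intro a ha ha'
      simp only [Finset.mem_Ico, Finset.mem_Icc] at ha ha'
      omega
    have hsplit : Finset.Icc 1 (n-1) = Finset.Ico 1 r ∪ Finset.Icc r (n-1) := by
      ext a
      simp only [Finset.mem_Icc, Finset.mem_union, Finset.mem_Ico]
      omega
    rw [hsplit, Finset.sum_union hdisj]
    have h1 : ∑ j1 ∈ Finset.Ico 1 r, (if j1 < r then (-1:ℤ)^r else if j1 = r then 0 else (-1:ℤ)^(r+1))
        = (r - 1 : ℤ) * (-1:ℤ)^r := by
      have hc : ∑ j1 ∈ Finset.Ico 1 r,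
          (if j1 < r then (-1:ℤ)^r else if j1 = r then 0 else (-1:ℤ)^(r+1))
          = ∑ j1 ∈ Finset.Ico 1 r, ((-1:ℤ)^r) := by
        apply Finset.sum_congr rfl
        intro j1 hj1
        simp only [Finset.mem_Ico] at hj1
        rw [if_pos hj1.2]
      rw [hc]
      simp only [Finset.sum_const, Nat.card_Ico, nsmul_eq_mul]
      have : ((r - 1 : ℕ) : ℤ) = (r:ℤ) - 1 := by omega
      rw [this]
    have hrmem : r ∈ Finset.Icc r (n-1) := by simp only [Finset.mem_Icc]; omega
    have h2 : ∑ j1 ∈ Finset.Icc r (n-1), (if j1 < r then (-1:ℤ)^r else if j1 = r then 0 else (-1:ℤ)^(r+1))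
        = ((n:ℤ) - 1 - r) * (-1:ℤ)^(r+1) := by
      rw [← Finset.sum_erase_add _ _ hrmem, if_neg (by omega), if_pos rfl, add_zero]
      have herase : (Finset.Icc r (n-1)).erase r = Finset.Ioc r (n-1) := by
        ext a
        simp only [Finset.mem_erase, Finset.mem_Icc, Finset.mem_Ioc]
        omega
      rw [herase]
      have hc : ∑ j1 ∈ Finset.Ioc r (n-1),
          (if j1 < r then (-1:ℤ)^r else if j1 = r then 0 else (-1:ℤ)^(r+1))
          = ∑ j1 ∈ Finset.Ioc r (n-1), ((-1:ℤ)^(r+1)) := by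
        apply Finset.sum_congr rfl
        intro j1 hj1
        simp only [Finset.mem_Ioc] at hj1
        rw [if_neg (by omega), if_neg (by omega)]
      rw [hc]
      simp only [Finset.sum_const, Nat.card_Ioc, nsmul_eq_mul]
      have : ((n - 1 - r : ℕ) : ℤ) = (n:ℤ) - 1 - r := by omega
      rw [this]
    rw [h1, h2, pow_add, pow_one]
    ring

lemma sum_id' (n : ℕ) : 2 * ∑ i ∈ Finset.range n, (i:ℤ) = n*(n-1) := by
  induction n with
  | zero => simp
  | succ m ih =>
    rw [Finset.sum_range_succ]
    push_cast
    push_cast at ih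
    linarith

lemma sum_sq' (n : ℕ) : 6 * ∑ i ∈ Finset.range n, (i:ℤ)^2 = n*(n-1)*(2*n-1) := by
  induction n with
  | zero => simp
  | succ m ih =>
    rw [Finset.sum_range_succ]
    push_cast
    push_cast at ih
    nlinarith [ih]

lemma sum_sq_shift (n : ℕ) (hn : 1 ≤ n) :
    3 * ∑ r ∈ Finset.Icc 1 (n-1), (2*(r:ℤ) - n)^2 = (n:ℤ)*((n:ℤ)-1)*((n:ℤ)-2) := by
  have hins : Finset.range n = insert 0 (Finset.Icc 1 (n-1)) := by
    ext a
    simp only [Finset.mem_range, Finset.mem_insert, Finset.mem_Icc]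
    omega
  have h0 : ∑ r ∈ Finset.range n, (2*(r:ℤ)-n)^2
      = (n:ℤ)^2 + ∑ r ∈ Finset.Icc 1 (n-1), (2*(r:ℤ)-n)^2 := by
    rw [hins, Finset.sum_insert (by simp)]
    norm_num
  have hexp : ∑ r ∈ Finset.range n, (2*(r:ℤ)-n)^2
      = 4*(∑ i ∈ Finset.range n, (i:ℤ)^2) - (4*(n:ℤ))*(∑ i ∈ Finset.range n, (i:ℤ)) + n*(n:ℤ)^2 := by
    have hterm : ∀ r : ℕ, (2*(r:ℤ)-n)^2 = 4*(r:ℤ)^2 - (4*(n:ℤ))*(r:ℤ) + (n:ℤ)^2 :=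
      fun r => by ring
    rw [Finset.sum_congr rfl (fun r _ => hterm r), Finset.sum_add_distrib,
      Finset.sum_sub_distrib, ← Finset.mul_sum, ← Finset.mul_sum, Finset.sum_const,
      Finset.card_range, nsmul_eq_mul]
  have h1 := sum_id' n
  have h2 := sum_sq' n
  have h3 : ∑ r ∈ Finset.Icc 1 (n-1), (2*(r:ℤ)-n)^2
      = ∑ r ∈ Finset.range n, (2*(r:ℤ)-n)^2 - (n:ℤ)^2 := by omega
  rw [h3, hexp]
  linear_combination 2*h2 - 6*(n:ℤ)*h1

noncomputable def om (n : ℕ) : ℂ := Complex.exp (2 * Real.pi * Complex.I / n)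

lemma om_pow_n (n : ℕ) (hn : 1 ≤ n) : om n ^ n = 1 := by
  rw [om, ← Complex.exp_nat_mul]
  have hn0 : (n:ℂ) ≠ 0 := Nat.cast_ne_zero.mpr (by omega)
  have h : (n:ℂ) * (2 * Real.pi * Complex.I / n) = 2 * Real.pi * Complex.I := by
    field_simp
  rw [h, Complex.exp_two_pi_mul_I]

lemma om_pow_eq_one_iff (n m : ℕ) (hn : 1 ≤ n) : om n ^ m = 1 ↔ n ∣ m := by
  constructor
  · intro h
    rw [om, ← Complex.exp_nat_mul, Complex.exp_eq_one_iff] at h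
    obtain ⟨t, ht⟩ := h
    have hne : (2*(Real.pi:ℂ)*Complex.I) ≠ 0 := by
      simp [Real.pi_ne_zero, Complex.I_ne_zero]
    have hn0 : (n:ℂ) ≠ 0 := Nat.cast_ne_zero.mpr (by omega)
    have h3 : (m:ℂ) / n * (2*Real.pi*Complex.I) = (t:ℂ) * (2*Real.pi*Complex.I) := by
      rw [← ht]; ring
    have h4 : (m:ℂ)/n = t := mul_right_cancel₀ hne h3
    have h5 : (m:ℂ) = t * n := by rw [← h4]; field_simp
    have h6 : (m:ℤ) = t * n := by exact_mod_cast h5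
    have : (n:ℤ) ∣ (m:ℤ) := ⟨t, by linarith⟩
    exact_mod_cast this
  · rintro ⟨c, rfl⟩
    rw [pow_mul, om_pow_n n hn, one_pow]

lemma root_sum (n m : ℕ) (hn : 1 ≤ n) :
    ∑ k ∈ Finset.Icc 1 n, (om n ^ m)^k = if n ∣ m then (n:ℂ) else 0 := by
  split_ifs with h
  · rw [Finset.sum_congr rfl (fun k _ => by
      rw [(om_pow_eq_one_iff n m hn).mpr h, one_pow])]
    simp [Nat.card_Icc]
  · have hx : om n ^ m ≠ 1 := fun hc => h ((om_pow_eq_one_iff n m hn).mp hc)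
    have hxn : (om n ^ m)^n = 1 := by
      rw [← pow_mul, mul_comm, pow_mul, om_pow_n n hn, one_pow]
    have hgeom : ∑ i ∈ Finset.range n, (om n ^ m)^i = 0 := by
      rw [geom_sum_eq hx, hxn]
      simp
    rw [sum_Icc_one n (fun k => (om n ^ m)^k)]
    have hterm : ∀ i : ℕ, (om n ^ m)^(i+1) = (om n ^ m) * (om n ^ m)^i := fun i => by
      rw [pow_succ]; ring
    rw [Finset.sum_congr rfl (fun i _ => hterm i), ← Finset.mul_sum, hgeom, mul_zero]

lemma telescope (n : ℕ) (hn : 1 ≤ n) (hodd : Odd n) (ζ : ℂ) (hζn : ζ^n = 1) :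
    (1 + ζ) * (∑ j ∈ Finset.Icc 1 (n-1), (-1:ℂ)^(j+1) * ζ^j) = ζ - 1 := by
  rw [Finset.mul_sum]
  rw [sum_Icc_one (n-1) (fun j => (1+ζ) * ((-1:ℂ)^(j+1) * ζ^j))]
  have hterm : ∀ i : ℕ, (1+ζ) * ((-1:ℂ)^(i+1+1) * ζ^(i+1))
      = ((fun i => (-1:ℂ)^i * ζ^(i+1)) i - (fun i => (-1:ℂ)^i * ζ^(i+1)) (i+1)) := by
    intro i
    dsimp only
    ring
  rw [Finset.sum_congr rfl (fun i _ => hterm i), Finset.sum_range_sub']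
  have h1 : n - 1 + 1 = n := by omega
  have h2 : Even (n-1) := Nat.Odd.sub_odd hodd odd_one
  rw [h1, hζn, h2.neg_one_pow]
  ring

lemma tan_eq_C (n : ℕ) (hn : 1 ≤ n) (hodd : Odd n) (k : ℕ) :
    ((Real.tan (k * Real.pi / n) : ℝ) : ℂ)
      = -Complex.I * ∑ j ∈ Finset.Icc 1 (n-1), (-1:ℂ)^(j+1) * (om n ^ k)^j := by
  have hn0 : (n:ℂ) ≠ 0 := Nat.cast_ne_zero.mpr (by omega)
  set θ : ℝ := (k : ℝ) * Real.pi / n with hθ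
  set E : ℂ := Complex.exp ((θ:ℂ) * Complex.I) with hE
  set ζ : ℂ := om n ^ k with hζdef
  have hzE : ζ = E^2 := by
    rw [hζdef, om, ← Complex.exp_nat_mul, hE]
    have h2 : E^2 = Complex.exp ((2:ℕ) * ((θ:ℂ) * Complex.I)) := by
      rw [Complex.exp_nat_mul]
    rw [hE] at h2
    rw [h2]
    congr 1
    push_cast [hθ]
    field_simp
  have hζn : ζ^n = 1 := by
    rw [hζdef, ← pow_mul, mul_comm, pow_mul, om_pow_n n hn, one_pow]
  have hζne : ζ ≠ -1 := by
    intro hc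
    have h := hζn
    rw [hc, hodd.neg_one_pow] at h
    norm_num at h
  have hζ1 : 1 + ζ ≠ 0 := by
    intro hc
    exact hζne (by linear_combination hc)
  have hexp1 : E = Complex.cos θ + Complex.sin θ * Complex.I := Complex.exp_mul_I _
  have hexp2 : E⁻¹ = Complex.cos θ - Complex.sin θ * Complex.I := by
    rw [hE, ← Complex.exp_neg]
    have h : -((θ:ℂ) * Complex.I) = ((-θ:ℝ):ℂ) * Complex.I := by push_cast; ring
    rw [h, Complex.exp_mul_I]
    push_cast
    rw [Complex.cos_neg, Complex.sin_neg]
    ring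
  have hpy := Complex.sin_sq_add_cos_sq (θ:ℂ)
  have hIsq : (Complex.I)^2 = -1 := Complex.I_sq
  have hcos_id : 1 + ζ = 2 * Complex.cos θ * E := by
    rw [hzE, hexp1]
    linear_combination (Complex.sin (θ:ℂ)^2) * hIsq - hpy
  have hsin_id : ζ - 1 = 2 * Complex.sin θ * Complex.I * E := by
    rw [hzE, hexp1]
    linear_combination hpy - Complex.sin (θ:ℂ)^2 * hIsq
  have hcosne : Complex.cos (θ:ℂ) ≠ 0 := by
    intro hc
    rw [hc] at hcos_id
    simp only [mul_zero, zero_mul] at hcos_id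
    exact hζ1 hcos_id
  have htel := telescope n hn hodd ζ hζn
  have hC : (∑ j ∈ Finset.Icc 1 (n-1), (-1:ℂ)^(j+1) * ζ^j) = (ζ - 1)/(1 + ζ) := by
    rw [eq_div_iff hζ1]
    linear_combination htel
  rw [Complex.ofReal_tan, Complex.tan_eq_sin_div_cos, hC]
  have hEne : E ≠ 0 := Complex.exp_ne_zero _
  field_simp
  linear_combination Complex.sin (θ:ℂ) * hcos_id
    + Complex.I * Complex.cos (θ:ℂ) * hsin_id
    + 2 * Complex.sin (θ:ℂ) * Complex.cos (θ:ℂ) * E * hIsq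

lemma Csq (n : ℕ) (hn : 1 ≤ n) (ζ : ℂ) (hζn : ζ^n = 1) :
    (∑ j ∈ Finset.Icc 1 (n-1), (-1:ℂ)^(j+1) * ζ^j)^2
      = ∑ r ∈ Finset.range n, ((Fint n r : ℤ) : ℂ) * ζ^r := by
  have hmod : ∀ m : ℕ, ζ^m = ζ^(m % n) := by
    intro m
    conv_lhs => rw [← Nat.div_add_mod m n]
    rw [pow_add, pow_mul, hζn, one_pow, one_mul]
  rw [sq, Finset.sum_mul_sum]
  have hterm : ∀ j1 j2 : ℕ, ((-1:ℂ)^(j1+1) * ζ^j1) * ((-1:ℂ)^(j2+1) * ζ^j2)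
      = (-1:ℂ)^(j1+j2) * ζ^((j1+j2) % n) := by
    intro j1 j2
    have h1 : (-1:ℂ)^(j1+1) * (-1)^(j2+1) = (-1)^(j1+j2) := by
      rw [← pow_add]
      have h : j1+1+(j2+1) = (j1+j2) + 2 := by omega
      rw [h, pow_add]
      norm_num
    calc ((-1:ℂ)^(j1+1) * ζ^j1) * ((-1:ℂ)^(j2+1) * ζ^j2)
        = ((-1:ℂ)^(j1+1) * (-1)^(j2+1)) * (ζ^j1 * ζ^j2) := by ring
      _ = (-1:ℂ)^(j1+j2) * ζ^(j1+j2) := by rw [h1, ← pow_add]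
      _ = (-1:ℂ)^(j1+j2) * ζ^((j1+j2) % n) := by rw [← hmod]
  rw [Finset.sum_congr rfl (fun j1 _ => Finset.sum_congr rfl (fun j2 _ => hterm j1 j2))]
  rw [← Finset.sum_product']
  rw [← Finset.sum_fiberwise_of_maps_to (g := fun p : ℕ × ℕ => (p.1 + p.2) % n)
    (t := Finset.range n) (fun p _ => Finset.mem_range.mpr (Nat.mod_lt _ (by omega)))]
  apply Finset.sum_congr rfl
  intro r hr
  have hstep : ∀ p ∈ (Finset.Icc 1 (n-1) ×ˢ Finset.Icc 1 (n-1)).filter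
      (fun p : ℕ × ℕ => (p.1 + p.2) % n = r),
      (-1:ℂ)^(p.1+p.2) * ζ^((p.1+p.2) % n) = (-1:ℂ)^(p.1+p.2) * ζ^r := by
    intro p hp
    simp only [Finset.mem_filter] at hp
    rw [hp.2]
  rw [Finset.sum_congr rfl hstep, ← Finset.sum_mul, Fint]
  push_cast
  rfl

lemma tan4_full_sum' (n : ℕ) (hn : 1 ≤ n) (hodd : Odd n) :
    ∑ m ∈ Finset.Icc 1 n, Real.tan (m * Real.pi / n) ^ 4
      = ((n:ℝ)^4 - 4*(n:ℝ)^2 + 3*(n:ℝ))/3 := by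
  have hζn : ∀ k : ℕ, (om n ^ k)^n = 1 := fun k => by
    rw [← pow_mul, mul_comm, pow_mul, om_pow_n n hn, one_pow]
  have hC4 : ∀ k : ℕ, ((Real.tan ((k:ℝ) * Real.pi / n) : ℝ) : ℂ)^4
      = (∑ r ∈ Finset.range n, ((Fint n r : ℤ):ℂ) * (om n ^ k)^r)^2 := by
    intro k
    rw [tan_eq_C n hn hodd k, mul_pow]
    have hI4 : (-Complex.I)^4 = 1 := by
      rw [show (4:ℕ) = 2*2 from rfl, pow_mul, neg_sq, Complex.I_sq]
      norm_num
    rw [hI4, one_mul, show (4:ℕ) = 2*2 from rfl, pow_mul, Csq n hn _ (hζn k)]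
  have key : ((∑ m ∈ Finset.Icc 1 n, Real.tan (m * Real.pi / n) ^ 4 : ℝ) : ℂ)
      = ∑ k ∈ Finset.Icc 1 n,
          (∑ r ∈ Finset.range n, ((Fint n r : ℤ):ℂ) * (om n ^ k)^r)^2 := by
    rw [Complex.ofReal_sum]
    exact Finset.sum_congr rfl (fun k _ => by rw [Complex.ofReal_pow, hC4 k])
  -- expand the square
  have expand : ∀ k : ℕ,
      (∑ r ∈ Finset.range n, ((Fint n r : ℤ):ℂ) * (om n ^ k)^r)^2
        = ∑ p ∈ Finset.range n ×ˢ Finset.range n,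
            (((Fint n p.1 : ℤ):ℂ) * ((Fint n p.2 : ℤ):ℂ)) * (om n ^ (p.1 + p.2))^k := by
    intro k
    rw [sq, Finset.sum_mul_sum, ← Finset.sum_product']
    apply Finset.sum_congr rfl
    intro p _
    rw [← pow_right_comm (om n) k (p.1+p.2), pow_add]
    ring
  rw [Finset.sum_congr rfl (fun k _ => expand k), Finset.sum_comm] at key
  have inner : ∀ p : ℕ × ℕ,
      ∑ k ∈ Finset.Icc 1 n,
          (((Fint n p.1 : ℤ):ℂ) * ((Fint n p.2 : ℤ):ℂ)) * (om n ^ (p.1 + p.2))^k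
        = (((Fint n p.1 : ℤ):ℂ) * ((Fint n p.2 : ℤ):ℂ))
            * (if n ∣ p.1 + p.2 then (n:ℂ) else 0) := by
    intro p
    rw [← Finset.mul_sum, root_sum n (p.1+p.2) hn]
  rw [Finset.sum_congr rfl (fun p _ => inner p)] at key
  -- restrict to the fiber where n ∣ p.1 + p.2
  have hsplit : ∑ p ∈ Finset.range n ×ˢ Finset.range n,
      (((Fint n p.1 : ℤ):ℂ) * ((Fint n p.2 : ℤ):ℂ)) * (if n ∣ p.1 + p.2 then (n:ℂ) else 0)
      = ∑ p ∈ (Finset.range n ×ˢ Finset.range n).filter (fun p => n ∣ p.1 + p.2),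
          (((Fint n p.1 : ℤ):ℂ) * ((Fint n p.2 : ℤ):ℂ)) * (n:ℂ) := by
    rw [Finset.sum_filter]
    apply Finset.sum_congr rfl
    intro p _
    split_ifs <;> simp
  rw [hsplit] at key
  have hset : (Finset.range n ×ˢ Finset.range n).filter (fun p => n ∣ p.1 + p.2)
      = insert ((0:ℕ),(0:ℕ)) ((Finset.Icc 1 (n-1)).image (fun r => (r, n - r))) := by
    ext p
    simp only [Finset.mem_filter, Finset.mem_product, Finset.mem_range, Finset.mem_insert,
      Finset.mem_image, Finset.mem_Icc, Prod.ext_iff]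
    constructor
    · rintro ⟨⟨h1, h2⟩, t, ht⟩
      have hts : t = 0 ∨ t = 1 := by
        rcases Nat.lt_or_ge t 2 with h | h
        · omega
        · exfalso
          have h2n : n * 2 ≤ n * t := Nat.mul_le_mul_left n h
          omega
      rcases hts with rfl | rfl
      · left; omega
      · right
        refine ⟨p.1, ⟨by omega, by omega⟩, rfl, by omega⟩
    · rintro (⟨h1, h2⟩ | ⟨r, ⟨hr1, hr2⟩, hrr1, hrr2⟩)
      · refine ⟨⟨by omega, by omega⟩, ?_⟩
        have h0 : p.1 + p.2 = 0 := by omega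
        rw [h0]
        exact dvd_zero n
      · refine ⟨⟨by omega, by omega⟩, ?_⟩
        have h0 : p.1 + p.2 = n := by omega
        rw [h0]
  rw [hset] at key
  have hnotmem : ((0:ℕ),(0:ℕ)) ∉ (Finset.Icc 1 (n-1)).image (fun r => (r, n - r)) := by
    simp only [Finset.mem_image, Finset.mem_Icc, Prod.ext_iff]
    rintro ⟨r, ⟨hr1, hr2⟩, hrr, -⟩
    omega
  rw [Finset.sum_insert hnotmem] at key
  have hinj : ∀ x ∈ Finset.Icc 1 (n-1), ∀ y ∈ Finset.Icc 1 (n-1),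
      (fun r => (r, n - r)) x = (fun r => (r, n - r)) y → x = y := by
    intro x _ y _ h
    exact (Prod.ext_iff.mp h).1
  rw [Finset.sum_image hinj] at key
  -- evaluate Fint values
  have hF0 : (Fint n 0 : ℤ) = 1 - n := by
    rw [Fint_eval n hn hodd 0 (by omega), if_pos rfl]
  have hFF : ∀ r ∈ Finset.Icc 1 (n-1),
      (Fint n r) * (Fint n (n - r)) = (2*(r:ℤ) - n)^2 := by
    intro r hr
    simp only [Finset.mem_Icc] at hr
    rw [Fint_eval n hn hodd r (by omega), if_neg (by omega),
      Fint_eval n hn hodd (n-r) (by omega), if_neg (by omega)]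
    have hc : ((n - r : ℕ) : ℤ) = (n:ℤ) - r := by omega
    rw [hc, ← mul_assoc, mul_comm ((-1:ℤ)^r * (2*(r:ℤ) - n)) ((-1:ℤ)^(n-r)), ← mul_assoc,
      ← pow_add]
    have he : n - r + r = n := by omega
    rw [he, hodd.neg_one_pow]
    ring
  -- final algebra
  have hsum3 := sum_sq_shift n hn
  have hgoalC : ((∑ m ∈ Finset.Icc 1 n, Real.tan (m * Real.pi / n) ^ 4 : ℝ) : ℂ)
      = (((n:ℝ)^4 - 4*(n:ℝ)^2 + 3*(n:ℝ))/3 : ℝ) := by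
    rw [key]
    have hFFc : ∀ r ∈ Finset.Icc 1 (n-1),
        (((Fint n r : ℤ):ℂ) * ((Fint n (n - r) : ℤ):ℂ)) * (n:ℂ)
          = (((2*(r:ℤ) - n)^2 : ℤ) : ℂ) * (n:ℂ) := by
      intro r hr
      congr 1
      rw [← Int.cast_mul, hFF r hr]
    rw [Finset.sum_congr rfl hFFc]
    have hpull : ∑ r ∈ Finset.Icc 1 (n-1), (((2*(r:ℤ) - n)^2 : ℤ) : ℂ) * (n:ℂ)
        = (((∑ r ∈ Finset.Icc 1 (n-1), (2*(r:ℤ) - n)^2 : ℤ) : ℂ)) * (n:ℂ) := by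
      rw [← Finset.sum_mul]
      congr 1
      push_cast
      rfl
    rw [hpull]
    set S : ℤ := ∑ r ∈ Finset.Icc 1 (n-1), (2*(r:ℤ) - n)^2 with hS
    have hs3C : 3*(S:ℂ) = (n:ℂ)*((n:ℂ)-1)*((n:ℂ)-2) := by
      exact_mod_cast congrArg (fun z : ℤ => (z : ℂ)) hsum3
    rw [hF0]
    push_cast
    linear_combination ((n:ℂ)/3) * hs3C
  exact_mod_cast hgoalC


lemma tan4_full_sum (x : ℕ) (hx : 1 ≤ x) (hodd : Odd x) :
    ∑ m ∈ Finset.Icc 1 x, Real.tan (m * Real.pi / x) ^ 4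
      = ((x:ℝ)^4 - 4*(x:ℝ)^2 + 3*(x:ℝ))/3 :=
  tan4_full_sum' x hx hodd

theorem sum_tan_four_reg (n : ℕ) (hn : 1 ≤ n) (hodd : Odd n) :
    ∑ k ∈ Reg n, Real.tan (k * Real.pi / n) ^ 4 =
      (1 / 3) * ((rhoInt 4 n : ℝ) - 4 * (rhoInt 2 n : ℝ) + 3 * ((Reg n).card : ℝ)) := by
  have hg : ∀ d m e : ℕ, 0 < d →
      Real.tan ((d*m : ℕ) * Real.pi / ((d*e : ℕ) : ℝ)) ^ 4
        = Real.tan ((m:ℝ) * Real.pi / (e:ℝ)) ^ 4 := by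
    intro d m e hd
    rcases Nat.eq_zero_or_pos e with he | he
    · subst he; push_cast; simp
    · push_cast
      rw [mul_assoc, mul_div_mul_left _ _ (by positivity : (d:ℝ) ≠ 0)]
  have h := reg_sum_eq n hn (fun m e => Real.tan ((m:ℝ) * Real.pi / (e:ℝ)) ^ 4) hg
  rw [h]
  have hodd_div : ∀ d : ℕ, d ∣ n → Odd d := fun d hd => hodd.of_dvd_nat hd
  have key : ∀ e ∈ unitaryDivisors n,
      (∑ f ∈ e.divisors, (ArithmeticFunction.moebius f : ℝ) *
          ∑ m ∈ Finset.Icc 1 (e/f), Real.tan ((m:ℝ) * Real.pi / ((e/f : ℕ):ℝ)) ^ 4)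
        = (1/3) * ((phiInt 4 e : ℝ) - 4*(phiInt 2 e : ℝ) + 3*(phiInt 1 e : ℝ)) := by
    intro e he
    have hen : e ∣ n := by
      simp only [unitaryDivisors, Finset.mem_filter, Nat.mem_divisors] at he
      exact he.1.1
    have he1 : 1 ≤ e := Nat.pos_of_dvd_of_pos hen (by omega)
    have step : ∀ f ∈ e.divisors,
        (ArithmeticFunction.moebius f : ℝ) *
            ∑ m ∈ Finset.Icc 1 (e/f), Real.tan ((m:ℝ) * Real.pi / ((e/f : ℕ):ℝ)) ^ 4
          = (ArithmeticFunction.moebius f : ℝ) *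
              (((e/f : ℕ):ℝ)^4 - 4*((e/f : ℕ):ℝ)^2 + 3*((e/f : ℕ):ℝ))/3 := by
      intro f hf
      simp only [Nat.mem_divisors] at hf
      have hfe : f ∣ e := hf.1
      have hf0 : 0 < f := Nat.pos_of_dvd_of_pos hfe he1
      have hef1 : 1 ≤ e / f := Nat.one_le_div_iff hf0 |>.mpr (Nat.le_of_dvd he1 hfe)
      have hefodd : Odd (e / f) := hodd_div _ ((Nat.div_dvd_of_dvd hfe).trans hen)
      rw [tan4_full_sum (e/f) hef1 hefodd]
      ring
    rw [Finset.sum_congr rfl step]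
    have expand : ∀ f ∈ e.divisors,
        (ArithmeticFunction.moebius f : ℝ) *
            (((e/f : ℕ):ℝ)^4 - 4*((e/f : ℕ):ℝ)^2 + 3*((e/f : ℕ):ℝ))/3
          = (1/3) * ((ArithmeticFunction.moebius f : ℝ) * ((e/f : ℕ):ℝ)^4)
            - (4/3) * ((ArithmeticFunction.moebius f : ℝ) * ((e/f : ℕ):ℝ)^2)
            + ((ArithmeticFunction.moebius f : ℝ) * ((e/f : ℕ):ℝ)^1) := by
      intro f _; ring
    rw [Finset.sum_congr rfl expand]
    rw [Finset.sum_add_distrib, Finset.sum_sub_distrib, ← Finset.mul_sum, ← Finset.mul_sum]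
    rw [divisor_reindex e he1 (fun x => (x:ℝ)^4), divisor_reindex e he1 (fun x => (x:ℝ)^2),
      divisor_reindex e he1 (fun x => (x:ℝ)^1)]
    rw [← phiInt_cast, ← phiInt_cast, ← phiInt_cast]
    ring
  rw [Finset.sum_congr rfl key]
  rw [card_reg n hn]
  rw [rhoInt, rhoInt, rhoInt]
  push_cast
  rw [Finset.mul_sum, ← Finset.sum_sub_distrib,
    Finset.mul_sum (unitaryDivisors n) (fun x => ((phiInt 1 x : ℤ) : ℝ)) 3,
    ← Finset.sum_add_distrib, Finset.mul_sum]
end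

section
/- For every n ∈ ℕ, Π_{k ∈ Reg_n} k = n^{ρ(n)} · Π_{d || n} A(d), where A(m) = Π_{e | m} (e!/e^e)^{μ(m/e)} and the outer product on the right runs over the unitary divisors d of n. -/
open Finset
open scoped Classical

/-- `A(m) = ∏_{e ∣ m} (e!/e^e)^{μ(m/e)}`. -/
noncomputable def Afun (m : ℕ) : ℝ :=
  ∏ e ∈ m.divisors,
    ((e.factorial : ℝ) / (e : ℝ) ^ e) ^ (ArithmeticFunction.moebius (m / e))


noncomputable def Fco (e : ℕ) : ℕ := ∏ j ∈ (Icc 1 e).filter (fun j => Nat.Coprime j e), j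

lemma Fco_pos (e : ℕ) : 0 < Fco e := by
  apply Finset.prod_pos
  intro j hj
  simp only [mem_filter, mem_Icc] at hj
  omega

lemma fiber_eq {d m : ℕ} (hm : 0 < m) (hd : d ∣ m) :
    (Icc 1 m).filter (fun k => Nat.gcd k m = d)
      = ((Icc 1 (m/d)).filter (fun j => Nat.Coprime j (m/d))).image (fun j => d * j) := by
  have hd0 : 0 < d := Nat.pos_of_dvd_of_pos hd hm
  have hmd : d * (m / d) = m := Nat.mul_div_cancel' hd
  ext k
  simp only [mem_filter, mem_Icc, mem_image]
  constructor
  · rintro ⟨⟨hk1, hkm⟩, hg⟩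
    have hdk : d ∣ k := hg ▸ Nat.gcd_dvd_left k m
    obtain ⟨j, rfl⟩ := hdk
    refine ⟨j, ⟨⟨?_, ?_⟩, ?_⟩, rfl⟩
    · rcases Nat.eq_zero_or_pos j with h | h
      · subst h; simp at hk1
      · exact h
    · exact Nat.le_div_iff_mul_le hd0 |>.2 (by rw [mul_comm]; exact hkm)
    · have h2 : Nat.gcd (d * j) (d * (m/d)) = d := by rw [hmd]; exact hg
      rw [Nat.gcd_mul_left] at h2
      exact Nat.eq_of_mul_eq_mul_left hd0 (by rw [h2, mul_one])
  · rintro ⟨j, ⟨⟨hj1, hjm⟩, hco⟩, rfl⟩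
    refine ⟨⟨Nat.mul_pos hd0 hj1, ?_⟩, ?_⟩
    · calc d * j ≤ d * (m / d) := by exact Nat.mul_le_mul_left d hjm
        _ = m := hmd
    · conv_lhs => rw [← hmd]
      rw [Nat.gcd_mul_left, hco, mul_one]

lemma card_coprime_Icc {e : ℕ} (he : 0 < e) :
    ((Icc 1 e).filter (fun j => Nat.Coprime j e)).card = e.totient := by
  rw [← Nat.filter_coprime_Ico_eq_totient e 1]
  congr 1
  rw [show 1 + e = e + 1 by ring, Finset.Ico_add_one_right_eq_Icc]
  apply Finset.filter_congr
  intro j _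
  simp [Nat.coprime_comm]

lemma fiber_prod {d m : ℕ} (hm : 0 < m) (hd : d ∣ m) :
    ∏ k ∈ (Icc 1 m).filter (fun k => Nat.gcd k m = d), k
      = d ^ (m / d).totient * Fco (m / d) := by
  have hd0 : 0 < d := Nat.pos_of_dvd_of_pos hd hm
  rw [fiber_eq hm hd, Finset.prod_image (by intro a _ b _ h; exact Nat.eq_of_mul_eq_mul_left hd0 h)]
  rw [Finset.prod_mul_distrib, Finset.prod_const, card_coprime_Icc (Nat.div_pos (Nat.le_of_dvd hm hd) hd0)]
  rfl

lemma fiber_card {d m : ℕ} (hm : 0 < m) (hd : d ∣ m) :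
    ((Icc 1 m).filter (fun k => Nat.gcd k m = d)).card = (m / d).totient := by
  have hd0 : 0 < d := Nat.pos_of_dvd_of_pos hd hm
  rw [fiber_eq hm hd, Finset.card_image_of_injective _ (by intro a b h; exact Nat.eq_of_mul_eq_mul_left hd0 h),
    card_coprime_Icc (Nat.div_pos (Nat.le_of_dvd hm hd) hd0)]

lemma prod_Icc_id_factorial (m : ℕ) : ∏ x ∈ Icc 1 m, x = m.factorial := by
  induction m with
  | zero => simp
  | succ k ih =>
    rw [← Finset.Ico_add_one_right_eq_Icc, Finset.prod_Ico_succ_top (by omega), Finset.Ico_add_one_right_eq_Icc, ih,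
      Nat.factorial_succ, mul_comm]

lemma factorial_partition {m : ℕ} (hm : 0 < m) :
    m.factorial = ∏ d ∈ m.divisors, d ^ (m / d).totient * Fco (m / d) := by
  rw [← prod_Icc_id_factorial]
  rw [← Finset.prod_fiberwise_of_maps_to (g := fun k => Nat.gcd k m) (t := m.divisors)
    (fun k hk => Nat.mem_divisors.2 ⟨Nat.gcd_dvd_right k m, hm.ne'⟩) (fun k => k)]
  exact Finset.prod_congr rfl fun d hd => fiber_prod hm (Nat.dvd_of_mem_divisors hd)

lemma factorial_partition' {n : ℕ} (hn : 0 < n) :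
    n.factorial = ∏ e ∈ n.divisors, (n / e) ^ e.totient * Fco e := by
  rw [← Nat.prod_div_divisors n (fun e => (n / e) ^ e.totient * Fco e)]
  rw [factorial_partition hn]
  apply Finset.prod_congr rfl
  intro d hd
  rw [Nat.div_div_self (Nat.dvd_of_mem_divisors hd) hn.ne']

lemma key_nat {n : ℕ} (hn : 0 < n) :
    n.factorial * ∏ e ∈ n.divisors, e ^ e.totient = n ^ n * ∏ e ∈ n.divisors, Fco e := by
  rw [factorial_partition' hn, ← Finset.prod_mul_distrib]
  have h1 : ∀ e ∈ n.divisors, (n / e) ^ e.totient * Fco e * e ^ e.totient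
      = n ^ e.totient * Fco e := by
    intro e he
    have : n / e * e = n := Nat.div_mul_cancel (Nat.dvd_of_mem_divisors he)
    rw [mul_right_comm, ← mul_pow, this]
  rw [Finset.prod_congr rfl h1, Finset.prod_mul_distrib, Finset.prod_pow_eq_pow_sum,
    Nat.sum_totient]

lemma prod_Fco_div {n : ℕ} (hn : 0 < n) :
    ∏ e ∈ n.divisors, ((Fco e : ℝ) / (e : ℝ) ^ e.totient)
      = (n.factorial : ℝ) / (n : ℝ) ^ n := by
  rw [Finset.prod_div_distrib]
  rw [div_eq_div_iff (by
      apply Finset.prod_ne_zero_iff.2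
      intro e he
      exact pow_ne_zero _ (Nat.cast_ne_zero.2 (Nat.pos_of_mem_divisors he).ne'))
    (pow_ne_zero _ (Nat.cast_ne_zero.2 hn.ne'))]
  rw [mul_comm]
  exact_mod_cast (key_nat hn).symm


lemma Fco_eq_Afun {m : ℕ} (hm : 0 < m) :
    (Fco m : ℝ) = (m : ℝ) ^ m.totient * Afun m := by
  have hf : ∀ k : ℕ, 0 < k → ((Fco k : ℝ) / (k : ℝ) ^ k.totient) ≠ 0 := fun k hk =>
    div_ne_zero (Nat.cast_ne_zero.2 (Fco_pos k).ne')
      (pow_ne_zero _ (Nat.cast_ne_zero.2 hk.ne'))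
  have hg : ∀ k : ℕ, 0 < k → ((k.factorial : ℝ) / (k : ℝ) ^ k) ≠ 0 := fun k hk =>
    div_ne_zero (Nat.cast_ne_zero.2 k.factorial_ne_zero)
      (pow_ne_zero _ (Nat.cast_ne_zero.2 hk.ne'))
  have := (ArithmeticFunction.prod_eq_iff_prod_pow_moebius_eq_of_nonzero
    (f := fun k => (Fco k : ℝ) / (k : ℝ) ^ k.totient)
    (g := fun k => (k.factorial : ℝ) / (k : ℝ) ^ k) hf hg).mp
    (fun k hk => prod_Fco_div hk) m hm
  rw [Nat.prod_divisorsAntidiagonal'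
    (f := fun a b => ((b.factorial : ℝ) / (b : ℝ) ^ b) ^ (ArithmeticFunction.moebius a))] at this
  have hA : Afun m = ∏ i ∈ m.divisors,
      ((i.factorial : ℝ) / (i : ℝ) ^ i) ^ (ArithmeticFunction.moebius (m / i)) := rfl
  rw [← hA] at this
  rw [this]
  field_simp



lemma regular_iff {n k : ℕ} (hn : 0 < n) (hk : 0 < k) :
    IsRegularMod k n ↔ Nat.gcd k n ∈ unitaryDivisors n := by
  set d := Nat.gcd k n with hd
  have hdn : d ∣ n := Nat.gcd_dvd_right k n
  have hdk : d ∣ k := Nat.gcd_dvd_left k n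
  constructor
  · rintro ⟨x, hx⟩
    simp only [unitaryDivisors, Finset.mem_filter, Nat.mem_divisors]
    refine ⟨⟨hdn, hn.ne'⟩, ?_⟩
    by_contra h
    set p := (Nat.gcd d (n / d)).minFac with hp
    have hpp : p.Prime := Nat.minFac_prime h
    have hpd : p ∣ d := (Nat.minFac_dvd _).trans (Nat.gcd_dvd_left _ _)
    have hpnd : p ∣ n / d := (Nat.minFac_dvd _).trans (Nat.gcd_dvd_right _ _)
    have hpk : p ∣ k := hpd.trans hdk
    set a := n.factorization p with ha
    -- p^a divides k
    have hnotdvd : ¬ ((p : ℤ) ∣ (k : ℤ) * x - 1) := by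
      intro hdvd
      have : (p : ℤ) ∣ 1 := by
        have h1 : (p : ℤ) ∣ (k : ℤ) * x := Dvd.dvd.mul_right (Int.natCast_dvd_natCast.2 hpk) x
        have := dvd_sub h1 hdvd
        simpa using this
      have := Int.eq_one_of_dvd_one (by positivity) this
      exact_mod_cast hpp.one_lt.ne' (by exact_mod_cast this)
    have hcop : IsCoprime ((p : ℤ) ^ a) ((k : ℤ) * x - 1) :=
      ((Nat.prime_iff_prime_int.mp hpp).coprime_iff_not_dvd.2 hnotdvd).pow_left
    have hpan : (p : ℤ) ^ a ∣ (k : ℤ) * ((k : ℤ) * x - 1) := by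
      have h1 : ((p ^ a : ℕ) : ℤ) ∣ (n : ℤ) := Int.natCast_dvd_natCast.2 (Nat.ordProj_dvd n p)
      push_cast at h1
      refine h1.trans ?_
      have : (k : ℤ) * ((k : ℤ) * x - 1) = (k : ℤ) ^ 2 * x - k := by ring
      rw [this]
      exact hx
    have hpak : (p : ℤ) ^ a ∣ (k : ℤ) := hcop.dvd_of_dvd_mul_right hpan
    have hpakN : p ^ a ∣ k := by exact_mod_cast hpak
    have hpad : p ^ a ∣ d := Nat.dvd_gcd hpakN (Nat.ordProj_dvd n p)
    have : p ^ (a + 1) ∣ n := by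
      rw [pow_succ]
      calc p ^ a * p ∣ d * (n / d) := mul_dvd_mul hpad hpnd
        _ = n := Nat.mul_div_cancel' hdn
    exact Nat.pow_succ_factorization_not_dvd hn.ne' hpp this
  · intro hmem
    simp only [unitaryDivisors, Finset.mem_filter, Nat.mem_divisors] at hmem
    obtain ⟨-, hco⟩ := hmem
    set m := n / d with hm
    have hkm : Nat.Coprime k m := by
      have h2 : Nat.gcd k m ∣ d :=
        Nat.dvd_gcd (Nat.gcd_dvd_left k m) ((Nat.gcd_dvd_right k m).trans (Nat.div_dvd_of_dvd hdn))
      have h3 : Nat.gcd k m ∣ Nat.gcd d m := Nat.dvd_gcd h2 (Nat.gcd_dvd_right k m)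
      exact Nat.eq_one_of_dvd_one (hco ▸ h3)
    obtain ⟨u, v, huv⟩ := Nat.isCoprime_iff_coprime.2 hkm
    refine ⟨u, ?_⟩
    have h4 : (m : ℤ) ∣ (k : ℤ) * u - 1 := ⟨-v, by linear_combination huv⟩
    have h5 : (n : ℤ) = (d : ℤ) * m := by exact_mod_cast (Nat.mul_div_cancel' hdn).symm
    have h6 : (k : ℤ) ^ 2 * u - k = (k : ℤ) * ((k : ℤ) * u - 1) := by ring
    rw [h5, h6]
    exact mul_dvd_mul (Int.natCast_dvd_natCast.2 hdk) h4


lemma div_mem_unitaryDivisors {n d : ℕ} (hn : 0 < n) (hd : d ∈ unitaryDivisors n) :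
    n / d ∈ unitaryDivisors n := by
  simp only [unitaryDivisors, Finset.mem_filter, Nat.mem_divisors] at hd ⊢
  obtain ⟨⟨hdn, -⟩, hco⟩ := hd
  refine ⟨⟨Nat.div_dvd_of_dvd hdn, hn.ne'⟩, ?_⟩
  rw [Nat.div_div_self hdn hn.ne']
  exact hco.symm

lemma reg_fiber {n d : ℕ} (hn : 0 < n) (hd : d ∈ unitaryDivisors n) :
    (Reg n).filter (fun k => Nat.gcd k n = d)
      = (Icc 1 n).filter (fun k => Nat.gcd k n = d) := by
  ext k
  simp only [Reg, Finset.filter_filter, Finset.mem_filter, mem_Icc]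
  constructor
  · rintro ⟨h1, -, h3⟩; exact ⟨h1, h3⟩
  · rintro ⟨⟨hk1, hkn⟩, hg⟩
    exact ⟨⟨hk1, hkn⟩, (regular_iff hn hk1).mpr (hg ▸ hd), hg⟩

theorem prod_reg_eq (n : ℕ) (hn : 1 ≤ n) :
    (∏ k ∈ Reg n, (k : ℝ)) =
      (n : ℝ) ^ (Reg n).card * ∏ d ∈ unitaryDivisors n, Afun d := by
  have hn0 : 0 < n := hn
  have hmaps : ∀ k ∈ Reg n, Nat.gcd k n ∈ unitaryDivisors n := by
    intro k hk
    simp only [Reg, Finset.mem_filter, mem_Icc] at hk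
    exact (regular_iff hn0 hk.1.1).mp hk.2
  -- fiberwise product
  rw [← Finset.prod_fiberwise_of_maps_to (g := fun k => Nat.gcd k n)
    (t := unitaryDivisors n) hmaps (fun k => (k : ℝ))]
  -- card fiberwise
  have hcard : (Reg n).card = ∑ d ∈ unitaryDivisors n, (n / d).totient := by
    rw [Finset.card_eq_sum_card_fiberwise hmaps]
    refine Finset.sum_congr rfl fun d hd => ?_
    rw [reg_fiber hn0 hd, fiber_card hn0 (Nat.dvd_of_mem_divisors (Finset.mem_filter.1 hd).1)]
  have hstep : ∀ d ∈ unitaryDivisors n,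
      (∏ k ∈ (Reg n).filter (fun k => Nat.gcd k n = d), (k : ℝ))
        = (n : ℝ) ^ (n / d).totient * Afun (n / d) := by
    intro d hd
    have hdn : d ∣ n := Nat.dvd_of_mem_divisors (Finset.mem_filter.1 hd).1
    have hd0 : 0 < d := Nat.pos_of_dvd_of_pos hdn hn0
    have hnd0 : 0 < n / d := Nat.div_pos (Nat.le_of_dvd hn0 hdn) hd0
    rw [reg_fiber hn0 hd]
    have : (∏ k ∈ (Icc 1 n).filter (fun k => Nat.gcd k n = d), (k : ℝ))
        = ((d ^ (n / d).totient * Fco (n / d) : ℕ) : ℝ) := by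
      rw [← fiber_prod hn0 hdn]
      push_cast
      rfl
    rw [this]
    push_cast [Fco_eq_Afun hnd0]
    rw [← mul_assoc, ← mul_pow]
    congr 2
    exact_mod_cast Nat.mul_div_cancel' hdn
  rw [Finset.prod_congr rfl hstep, Finset.prod_mul_distrib, Finset.prod_pow_eq_pow_sum, ← hcard]
  congr 1
  refine Finset.prod_nbij' (fun d => n / d) (fun d => n / d) ?_ ?_ ?_ ?_ ?_
  · intro d hd; exact div_mem_unitaryDivisors hn0 hd
  · intro d hd; exact div_mem_unitaryDivisors hn0 hd
  · intro d hd
    exact Nat.div_div_self (Nat.dvd_of_mem_divisors (Finset.mem_filter.1 hd).1) hn0.ne'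
  · intro d hd
    exact Nat.div_div_self (Nat.dvd_of_mem_divisors (Finset.mem_filter.1 hd).1) hn0.ne'
  · intro d hd; rfl
end

section
/- For every odd n ∈ ℕ with n ≥ 3, Π_{1 ≤ k ≤ n−1, k regular (mod n)} cos(kπ/n) = (−1/4)^{(ρ(n)−1)/2}. -/
open Finset Real
open scoped Classical

lemma isReg_iff (n k : ℕ) [NeZero n] :
    IsRegularMod k n ↔ ∃ x : ZMod n, (k : ZMod n) ^ 2 * x = k := by
  constructor
  · rintro ⟨x, hx⟩
    refine ⟨(x : ZMod n), ?_⟩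
    have h : ((((k:ℤ)^2 * x - k : ℤ)) : ZMod n) = 0 :=
      (ZMod.intCast_zmod_eq_zero_iff_dvd _ n).mpr hx
    push_cast at h
    linear_combination h
  · rintro ⟨x, hx⟩
    refine ⟨(x.val : ℤ), ?_⟩
    rw [← ZMod.intCast_zmod_eq_zero_iff_dvd]
    push_cast
    rw [ZMod.natCast_val, ZMod.cast_id]
    linear_combination hx

theorem prod_cos_reg (n : ℕ) (hn : 3 ≤ n) (hodd : Odd n) :
    ∏ k ∈ (Finset.Icc 1 (n - 1)).filter (fun k => IsRegularMod k n),
        Real.cos (k * Real.pi / n) =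
      (-(1 / 4) : ℝ) ^ (((Reg n).card - 1) / 2) := by
  obtain ⟨j, hj⟩ := hodd
  have hn0 : 0 < n := by omega
  have : NeZero n := ⟨by omega⟩
  have hnR : (0:ℝ) < n := by exact_mod_cast hn0
  set S := (Finset.Icc 1 (n-1)).filter (fun k => IsRegularMod k n) with hS
  have hmemS : ∀ k ∈ S, 1 ≤ k ∧ k ≤ n - 1 := by
    intro k hk
    simp only [hS, mem_filter, mem_Icc] at hk
    exact hk.1
  have hcop : Nat.Coprime 2 n := by
    rw [Nat.coprime_comm]; exact Nat.coprime_two_right.mpr ⟨j, hj⟩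
  set u : (ZMod n)ˣ := ZMod.unitOfCoprime 2 hcop with hu
  have hu2 : (u : ZMod n) = 2 := by simp [hu, ZMod.unitOfCoprime]
  -- the doubling map
  set f : ℕ → ℕ := fun k => (2 * k) % n with hf
  have step : ∀ k ∈ S, f k ∈ S := by
    intro k hk
    simp only [hS, hf, mem_filter, mem_Icc] at hk ⊢
    obtain ⟨⟨hk1, hk2⟩, hreg⟩ := hk
    have hne : (2 * k) % n ≠ 0 := by
      intro h
      have hd : n ∣ 2 * k := Nat.dvd_of_mod_eq_zero h
      have h2 := (Nat.Coprime.dvd_of_dvd_mul_left (Nat.Coprime.symm hcop) hd)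
      have := Nat.le_of_dvd (by omega) h2
      omega
    refine ⟨⟨by omega, by have := Nat.mod_lt (2*k) hn0; omega⟩, ?_⟩
    rw [isReg_iff] at hreg ⊢
    obtain ⟨x, hx⟩ := hreg
    refine ⟨x * (u⁻¹ : (ZMod n)ˣ), ?_⟩
    have hcast : (((2 * k) % n : ℕ) : ZMod n) = 2 * k := by
      rw [ZMod.natCast_mod]; push_cast; ring
    have huinv : (2 : ZMod n) * (u⁻¹ : (ZMod n)ˣ) = 1 := by
      rw [← hu2]; exact u.mul_inv
    show ((((2 * k) % n : ℕ) : ZMod n))^2 * _ = _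
    rw [hcast]
    calc (2 * (k:ZMod n))^2 * (x * (u⁻¹ : (ZMod n)ˣ))
        = (2 * ((u⁻¹ : (ZMod n)ˣ) * 2)) * ((k:ZMod n)^2 * x) := by ring
      _ = 2 * (k:ZMod n) := by rw [mul_comm ((u⁻¹:(ZMod n)ˣ):ZMod n) 2, huinv, hx]; ring
  have hinj : Set.InjOn f S := by
    intro a ha b hb hab
    obtain ⟨ha1, ha2⟩ := hmemS a ha
    obtain ⟨hb1, hb2⟩ := hmemS b hb
    have hmod : 2 * a ≡ 2 * b [MOD n] := hab
    have := (Nat.ModEq.cancel_left_of_coprime (by simpa using hcop)) hmod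
    have h1 : a % n = b % n := this
    rw [Nat.mod_eq_of_lt (by omega), Nat.mod_eq_of_lt (by omega)] at h1
    exact h1
  have hsurj : Set.SurjOn f ↑S ↑S := by
    intro b hb
    obtain ⟨a, ha, hab⟩ := Finset.surj_on_of_inj_on_of_card_le (fun a _ => f a)
      (fun a ha => step a ha) (fun a₁ a₂ h1 h2 h => hinj h1 h2 h) le_rfl b (by simpa using hb)
    exact ⟨a, by simpa using ha, hab.symm⟩
  -- membership of n - k
  have neg_mem : ∀ k ∈ S, n - k ∈ S := by
    intro k hk
    simp only [hS, mem_filter, mem_Icc] at hk ⊢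
    obtain ⟨⟨hk1, hk2⟩, x, hx⟩ := hk
    refine ⟨⟨by omega, by omega⟩, -x, ?_⟩
    have hc : ((n - k : ℕ) : ℤ) = (n : ℤ) - k := by
      push_cast [Nat.cast_sub (by omega : k ≤ n)]; ring
    rw [hc]
    have h5 : ((n:ℤ) - k)^2 * (-x) - ((n:ℤ) - k)
        = -((k:ℤ)^2*x - k) + (n:ℤ)*(-(n:ℤ)*x + 2*k*x - 1) := by ring
    rw [h5]
    exact dvd_add (dvd_neg.mpr hx) (Dvd.intro _ rfl)
  -- count of large elements
  set m := (S.filter (fun k => n < 2*k)).card with hm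
  have hcard : S.card = 2 * m := by
    have heq : (S.filter (fun k => ¬ n < 2*k)).card = m := by
      rw [hm]
      apply Finset.card_nbij' (fun k => n - k) (fun k => n - k)
      · intro a ha
        simp only [mem_coe, mem_filter] at ha ⊢
        have := hmemS a ha.1
        exact ⟨neg_mem a ha.1, by omega⟩
      · intro a ha
        simp only [mem_coe, mem_filter] at ha ⊢
        have := hmemS a ha.1
        exact ⟨neg_mem a ha.1, by omega⟩
      · intro a ha
        simp only [mem_coe, mem_filter] at ha
        have := hmemS a ha.1
        dsimp only
        omega
      · intro a ha
        simp only [mem_coe, mem_filter] at ha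
        have := hmemS a ha.1
        dsimp only
        omega
    have := Finset.card_filter_add_card_filter_not (s := S) (p := fun k => n < 2*k)
    omega
  -- positivity of sines
  have hsin_pos : ∀ k ∈ S, 0 < Real.sin (k * π / n) := by
    intro k hk
    obtain ⟨h1, h2⟩ := hmemS k hk
    apply Real.sin_pos_of_pos_of_lt_pi
    · have : (1:ℝ) ≤ (k:ℝ) := by exact_mod_cast h1
      have hπ := Real.pi_pos
      positivity
    · rw [div_lt_iff₀ hnR]
      have hkn : (k:ℝ) < n := by exact_mod_cast (by omega : k < n)
      have hπ := Real.pi_pos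
      nlinarith
  -- key pointwise identity
  have key : ∀ k ∈ S, Real.sin ((f k : ℝ) * π / n)
      = (if n < 2*k then (-1:ℝ) else 1) * (2 * Real.sin (k * π / n) * Real.cos (k * π / n)) := by
    intro k hk
    obtain ⟨h1, h2⟩ := hmemS k hk
    have hd : Real.sin (((2*k : ℕ):ℝ) * π / n) = 2 * Real.sin (k*π/n) * Real.cos (k*π/n) := by
      have he : ((2*k : ℕ):ℝ) * π / n = 2 * ((k:ℝ) * π / n) := by push_cast; ring
      rw [he, Real.sin_two_mul]
    by_cases hlt : n < 2*k
    · rw [if_pos hlt]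
      have hle : n ≤ 2*k := le_of_lt hlt
      have hmod : f k = 2*k - n := by
        simp only [hf]
        rw [Nat.mod_eq_sub_mod hle, Nat.mod_eq_of_lt (by omega)]
      rw [hmod]
      have hc : ((2*k - n : ℕ):ℝ) = ((2*k:ℕ):ℝ) - n := by
        push_cast [Nat.cast_sub hle]; ring
      have he2 : ((2*k - n : ℕ):ℝ) * π / n = ((2*k:ℕ):ℝ) * π / n - π := by
        rw [hc]; field_simp
      rw [he2, Real.sin_sub_pi, hd]; ring
    · rw [if_neg hlt]
      have hmod : f k = 2*k := by
        simp only [hf]; exact Nat.mod_eq_of_lt (by omega)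
      rw [hmod, hd]; ring
  -- product bijection
  have hbij : ∏ k ∈ S, Real.sin ((f k : ℝ) * π / n) = ∏ r ∈ S, Real.sin ((r:ℝ) * π / n) :=
    Finset.prod_nbij f step hinj hsurj (fun a _ => rfl)
  set A := ∏ k ∈ S, Real.sin ((k:ℝ) * π / n) with hA
  set P := ∏ k ∈ S, Real.cos ((k:ℝ) * π / n) with hP
  have hprod : A = (-1:ℝ)^m * (2^S.card * (A * P)) := by
    have e1 : ∏ k ∈ S, Real.sin ((f k : ℝ) * π / n) = (-1:ℝ)^m * (2^S.card * (A * P)) := by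
      rw [Finset.prod_congr rfl key, Finset.prod_mul_distrib]
      congr 1
      · rw [Finset.prod_ite, Finset.prod_const, Finset.prod_const_one, mul_one, hm]
      · rw [show (fun k : ℕ => 2 * Real.sin ((k:ℝ)*π/n) * Real.cos ((k:ℝ)*π/n))
            = (fun k : ℕ => 2 * (Real.sin ((k:ℝ)*π/n) * Real.cos ((k:ℝ)*π/n))) by
              funext k; ring,
          Finset.prod_mul_distrib, Finset.prod_mul_distrib, Finset.prod_const, hA, hP]
    rw [← e1, hbij]
  have hApos : 0 < A := Finset.prod_pos hsin_pos
  have hAne : A ≠ 0 := ne_of_gt hApos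
  have h2c : ((2:ℝ)^S.card) ≠ 0 := by positivity
  have hsq : ((-1:ℝ)^m) * ((-1:ℝ)^m) = 1 := by rw [← mul_pow]; norm_num
  have key2 : (P * 2^S.card) * A = ((-1:ℝ)^m) * A := by
    linear_combination (-((-1:ℝ)^m)) * hprod - (2^S.card * A * P) * hsq
  have h3 : P * 2^S.card = (-1:ℝ)^m := mul_right_cancel₀ hAne key2
  have hPval : P = (-1:ℝ)^m / 2^S.card := by
    rw [eq_div_iff h2c]; exact h3
  -- card of Reg
  have hnreg : IsRegularMod n n := ⟨0, by simp⟩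
  have hRegcard : (Reg n).card = S.card + 1 := by
    have h1 : Finset.Icc 1 n = insert n (Finset.Icc 1 (n-1)) := by
      ext a; simp only [mem_Icc, Finset.mem_insert]; omega
    rw [Reg, h1, Finset.filter_insert, if_pos hnreg,
      Finset.card_insert_of_notMem (by simp [mem_Icc]; omega), hS]
  have hexp : ((Reg n).card - 1) / 2 = m := by omega
  rw [hexp, hPval, hcard]
  rw [show (-(1/4):ℝ) = (-1) * (1/4) by norm_num, mul_pow, pow_mul]
  norm_num [div_pow, div_eq_mul_inv]
end
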